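/- Every tensor X ∈ ℂ^{n1×n2×n3} with tubal rank r admits a truncated t-SVD: there exist column-orthogonal tensors U ∈ ℂ^{n1×r×n3} and V ∈ ℂ^{n2×r×n3} and an f-diagonal tensor S ∈ ℂ^{r×r×n3} such that X = U * S * V^H. -/

import Mathlib

open Complex Matrix BigOperators Kronecker

noncomputable section

/-- DFT along the third mode, applied slice-wise. -/
def dft {n1 n2 n3 : ℕ} (X : Fin n3 → Matrix (Fin n1) (Fin n2) ℂ) :
    Fin n3 → Matrix (Fin n1) (Fin n2) ℂ :=
  fun k => ∑ j : Fin n3,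
    Complex.exp (-2 * (Real.pi : ℂ) * Complex.I * ((k : ℕ) : ℂ) * ((j : ℕ) : ℂ) / (n3 : ℂ)) • X j

/-- Block circulant matrix of a third-order tensor. -/
def bcirc {n1 n2 n3 : ℕ} (X : Fin n3 → Matrix (Fin n1) (Fin n2) ℂ) :
    Matrix (Fin n3 × Fin n1) (Fin n3 × Fin n2) ℂ :=
  Matrix.of fun p q => X (p.1 - q.1) p.2 q.2

/-- Vertical stacking of the frontal slices. -/
def bvec {n2 n4 n3 : ℕ} (Y : Fin n3 → Matrix (Fin n2) (Fin n4) ℂ) :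
    Matrix (Fin n3 × Fin n2) (Fin n4) ℂ :=
  Matrix.of fun p c => Y p.1 p.2 c

/-- t-product of third-order tensors, defined via bvfold(bcirc(X)·bvec(Y)). -/
def tMul {n1 n2 n4 n3 : ℕ} (X : Fin n3 → Matrix (Fin n1) (Fin n2) ℂ)
    (Y : Fin n3 → Matrix (Fin n2) (Fin n4) ℂ) :
    Fin n3 → Matrix (Fin n1) (Fin n4) ℂ :=
  fun k => Matrix.of fun a c => (bcirc X * bvec Y) (k, a) c

/-- Tensor conjugate transpose: conjugate-transpose each frontal slice and
reverse the order of slices 2 through n3. -/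
def tH {n1 n2 n3 : ℕ} (X : Fin n3 → Matrix (Fin n1) (Fin n2) ℂ) :
    Fin n3 → Matrix (Fin n2) (Fin n1) ℂ :=
  fun k => (X (-k))ᴴ

/-- Identity tensor: first frontal slice the identity matrix, others zero. -/
def tId (n1 n3 : ℕ) : Fin n3 → Matrix (Fin n1) (Fin n1) ℂ :=
  fun k => if (k : ℕ) = 0 then 1 else 0

/-- Frobenius norm of a third-order tensor. -/
def fro {n1 n2 n3 : ℕ} (X : Fin n3 → Matrix (Fin n1) (Fin n2) ℂ) : ℝ :=
  Real.sqrt (∑ k, ∑ i, ∑ j, ‖X k i j‖ ^ 2)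

/-- Squared Frobenius norm of a matrix. -/
def mFrobSq {m n : ℕ} (A : Matrix (Fin m) (Fin n) ℂ) : ℝ :=
  ∑ i, ∑ j, ‖A i j‖ ^ 2

/-- Tubal rank: maximal rank of the Fourier-domain frontal slices. -/
def tubalRank {n1 n2 n3 : ℕ} (X : Fin n3 → Matrix (Fin n1) (Fin n2) ℂ) : ℕ :=
  Finset.univ.sup fun k => (dft X k).rank

/-- Mode-1 matricization. -/
def mode1 {n1 n2 n3 : ℕ} (X : Fin n3 → Matrix (Fin n1) (Fin n2) ℂ) :
    Matrix (Fin n1) (Fin n2 × Fin n3) ℂ :=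
  Matrix.of fun i p => X p.2 i p.1

/-- Mode-2 matricization. -/
def mode2 {n1 n2 n3 : ℕ} (X : Fin n3 → Matrix (Fin n1) (Fin n2) ℂ) :
    Matrix (Fin n2) (Fin n1 × Fin n3) ℂ :=
  Matrix.of fun j p => X p.2 p.1 j

/-- The n×n discrete Fourier matrix. -/
def dftMatrix (n : ℕ) : Matrix (Fin n) (Fin n) ℂ :=
  Matrix.of fun j k =>
    Complex.exp (-2 * (Real.pi : ℂ) * Complex.I * ((j : ℕ) : ℂ) * ((k : ℕ) : ℂ) / (n : ℂ))

-- ### roots of unity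
def zeta (n3 : ℕ) : ℂ := Complex.exp (-2 * (Real.pi : ℂ) * Complex.I / n3)

lemma zeta_pow_n3 {n3 : ℕ} (h : n3 ≠ 0) : zeta n3 ^ n3 = 1 := by
  rw [zeta, ← Complex.exp_nat_mul]
  have : (n3 : ℂ) * (-2 * (Real.pi : ℂ) * Complex.I / n3) = -(2 * Real.pi * Complex.I) := by
    have hn : (n3:ℂ) ≠ 0 := Nat.cast_ne_zero.mpr h
    field_simp
  rw [this, Complex.exp_neg, Complex.exp_two_pi_mul_I, inv_one]

lemma zeta_pow_mod {n3 : ℕ} (h : n3 ≠ 0) (m : ℕ) : zeta n3 ^ m = zeta n3 ^ (m % n3) := by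
  conv_lhs => rw [← Nat.div_add_mod m n3]
  rw [pow_add, pow_mul, zeta_pow_n3 h, one_pow, one_mul]

lemma zeta_pow_modEq {n3 : ℕ} (h : n3 ≠ 0) {a b : ℕ} (hab : a ≡ b [MOD n3]) :
    zeta n3 ^ a = zeta n3 ^ b := by
  rw [zeta_pow_mod h a, zeta_pow_mod h b, hab]

lemma isPrimitiveRoot_zeta {n3 : ℕ} (h : n3 ≠ 0) : IsPrimitiveRoot (zeta n3) n3 := by
  have h1 : zeta n3 = (Complex.exp (2 * Real.pi * Complex.I / n3))⁻¹ := by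
    rw [zeta, ← Complex.exp_neg]
    ring_nf
  rw [h1]
  exact (Complex.isPrimitiveRoot_exp n3 h).inv

lemma conj_zeta {n3 : ℕ} : (starRingEnd ℂ) (zeta n3) = (zeta n3)⁻¹ := by
    rw [zeta, ← Complex.exp_conj]
    rw [← Complex.exp_neg]
    congr 1
    simp only [map_div₀, _root_.map_mul, map_neg, Complex.conj_ofReal, Complex.conj_I, map_ofNat,
      map_natCast]
    ring

lemma conj_zeta_pow' {n3 : ℕ} (a : ℕ) :
    (starRingEnd ℂ) (zeta n3 ^ a) = (zeta n3 ^ a)⁻¹ := by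
  rw [map_pow, conj_zeta, inv_pow]

lemma conj_zeta_pow {n3 : ℕ} (h : n3 ≠ 0) (a b : ℕ) (hab : (a + b) % n3 = 0) :
    (starRingEnd ℂ) (zeta n3 ^ a) = zeta n3 ^ b := by
  rw [conj_zeta_pow']
  refine inv_eq_of_mul_eq_one_left ?_
  rw [← pow_add, zeta_pow_mod h, Nat.add_comm, hab, pow_zero]

-- ### dft rewritten via zeta
lemma dft_eq_zeta {n1 n2 n3 : ℕ} (X : Fin n3 → Matrix (Fin n1) (Fin n2) ℂ) (k : Fin n3) :
    dft X k = ∑ j : Fin n3, (zeta n3 ^ ((k : ℕ) * (j : ℕ))) • X j := by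
  unfold dft
  refine Finset.sum_congr rfl fun j _ => ?_
  congr 1
  rw [zeta, ← Complex.exp_nat_mul]
  congr 1
  push_cast
  ring

lemma sum_zeta_orth {n3 : ℕ} (h : n3 ≠ 0) (m j : Fin n3) :
    ∑ k : Fin n3, (starRingEnd ℂ) (zeta n3 ^ ((k : ℕ) * (j : ℕ))) *
      zeta n3 ^ ((k : ℕ) * (m : ℕ)) = if m = j then (n3 : ℂ) else 0 := by
  have hprim := isPrimitiveRoot_zeta h
  set ζ := zeta n3 with hζ
  have hconj : ∀ a : ℕ, (starRingEnd ℂ) (ζ ^ a) = (ζ ^ a)⁻¹ := fun a => conj_zeta_pow' a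
  set η : ℂ := ζ ^ (m : ℕ) * (ζ ^ (j : ℕ))⁻¹ with hη
  have hterm : ∀ k : Fin n3,
      (starRingEnd ℂ) (ζ ^ ((k : ℕ) * (j : ℕ))) * ζ ^ ((k : ℕ) * (m : ℕ)) = η ^ (k : ℕ) := by
    intro k
    rw [hconj, hη, mul_pow, mul_comm ((k:ℕ)) ((j:ℕ)), pow_mul, mul_comm ((k:ℕ)) ((m:ℕ)),
      pow_mul, ← inv_pow, mul_comm]
  simp only [hterm]
  rw [Fin.sum_univ_eq_sum_range (fun i => η ^ i) n3]
  by_cases hmj : m = j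
  · subst hmj
    have : η = 1 := by
      rw [hη, mul_inv_cancel₀]
      exact pow_ne_zero _ (hprim.ne_zero h)
    simp [this]
  · rw [if_neg hmj]
    have hζj : ζ ^ (j : ℕ) ≠ 0 := pow_ne_zero _ (hprim.ne_zero h)
    have hηz : η = ζ ^ ((m : ℕ) - (j : ℕ) : ℤ) := by
      rw [hη, zpow_sub₀ (hprim.ne_zero h), zpow_natCast, zpow_natCast, div_eq_mul_inv]
    have hne1 : η ≠ 1 := by
      rw [hηz]
      intro hone
      have hdvd : (n3 : ℤ) ∣ ((m : ℕ) - (j : ℕ) : ℤ) := hprim.zpow_eq_one_iff_dvd _ |>.mp hone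
      have hm := m.isLt
      have hj := j.isLt
      have : ((m : ℕ) : ℤ) - ((j : ℕ) : ℤ) = 0 := by
        rcases hdvd with ⟨c, hc⟩
        have hcz : c = 0 := by nlinarith [Int.natCast_pos.mpr (Nat.pos_of_ne_zero h)]
        rw [hcz, mul_zero] at hc
        omega
      have : (m : ℕ) = (j : ℕ) := by omega
      exact hmj (Fin.ext this)
    have hηn : η ^ n3 = 1 := by
      rw [hηz, ← zpow_natCast (ζ ^ (((m:ℕ):ℤ) - ((j:ℕ):ℤ))) n3, ← _root_.zpow_mul, mul_comm,
        _root_.zpow_mul, zpow_natCast, zeta_pow_n3 h, _root_.one_zpow]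
    rw [geom_sum_eq hne1, hηn, sub_self, zero_div]

lemma idft_dft {n1 n2 n3 : ℕ} (X : Fin n3 → Matrix (Fin n1) (Fin n2) ℂ) (j : Fin n3) :
    ∑ k : Fin n3, (starRingEnd ℂ) (zeta n3 ^ ((k : ℕ) * (j : ℕ))) • dft X k
      = (n3 : ℂ) • X j := by
  have h : n3 ≠ 0 := Fin.pos_iff_nonempty.mpr ⟨j⟩ |>.ne'
  calc ∑ k : Fin n3, (starRingEnd ℂ) (zeta n3 ^ ((k : ℕ) * (j : ℕ))) • dft X k
      = ∑ k : Fin n3, ∑ m : Fin n3,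
          ((starRingEnd ℂ) (zeta n3 ^ ((k : ℕ) * (j : ℕ))) * zeta n3 ^ ((k : ℕ) * (m : ℕ))) • X m := by
        refine Finset.sum_congr rfl fun k _ => ?_
        rw [dft_eq_zeta, Finset.smul_sum]
        exact Finset.sum_congr rfl fun m _ => (smul_smul _ _ _)
    _ = ∑ m : Fin n3, (∑ k : Fin n3,
          (starRingEnd ℂ) (zeta n3 ^ ((k : ℕ) * (j : ℕ))) * zeta n3 ^ ((k : ℕ) * (m : ℕ))) • X m := by
        rw [Finset.sum_comm]
        exact Finset.sum_congr rfl fun m _ => (Finset.sum_smul).symm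
    _ = ∑ m : Fin n3, (if m = j then (n3 : ℂ) else 0) • X m := by
        refine Finset.sum_congr rfl fun m _ => ?_
        rw [sum_zeta_orth h]
    _ = (n3 : ℂ) • X j := by
        simp [ite_smul]

lemma dft_injective {n1 n2 n3 : ℕ} {X Y : Fin n3 → Matrix (Fin n1) (Fin n2) ℂ}
    (hXY : dft X = dft Y) : X = Y := by
  funext j
  have h : n3 ≠ 0 := Fin.pos_iff_nonempty.mpr ⟨j⟩ |>.ne'
  have h1 := idft_dft X j
  have h2 := idft_dft Y j
  rw [hXY] at h1
  have := h1.symm.trans h2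
  have hn : (n3 : ℂ) ≠ 0 := Nat.cast_ne_zero.mpr h
  exact smul_right_injective _ hn this

-- ### dft is a homomorphism for the t-product
lemma zeta_pow_fin_add {n3 : ℕ} (h : n3 ≠ 0) (k : ℕ) (m l : Fin n3) :
    zeta n3 ^ (k * ((m + l : Fin n3) : ℕ)) = zeta n3 ^ (k * (m : ℕ)) * zeta n3 ^ (k * (l : ℕ)) := by
  rw [← pow_add, ← Nat.mul_add]
  refine zeta_pow_modEq h (Nat.ModEq.mul_left _ ?_)
  rw [Fin.val_add]
  exact Nat.mod_modEq _ _

lemma dft_tMul {n1 n2 n4 n3 : ℕ} (X : Fin n3 → Matrix (Fin n1) (Fin n2) ℂ)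
    (Y : Fin n3 → Matrix (Fin n2) (Fin n4) ℂ) (k : Fin n3) :
    dft (tMul X Y) k = dft X k * dft Y k := by
  have h : n3 ≠ 0 := (Fin.pos_iff_nonempty.mpr ⟨k⟩).ne'
  haveI : NeZero n3 := ⟨h⟩
  ext a c
  rw [dft_eq_zeta, dft_eq_zeta, dft_eq_zeta, Matrix.mul_apply]
  simp only [Matrix.sum_apply, Matrix.smul_apply, smul_eq_mul]
  calc
    ∑ j : Fin n3, zeta n3 ^ ((k:ℕ) * (j:ℕ)) * tMul X Y j a c
      = ∑ j : Fin n3, ∑ l : Fin n3, ∑ b : Fin n2,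
          zeta n3 ^ ((k:ℕ) * (j:ℕ)) * (X (j - l) a b * Y l b c) := by
        refine Finset.sum_congr rfl fun j _ => ?_
        rw [tMul, Matrix.of_apply, Matrix.mul_apply, Fintype.sum_prod_type, Finset.mul_sum]
        refine Finset.sum_congr rfl fun l _ => ?_
        rw [Finset.mul_sum]
        rfl
    _ = ∑ l : Fin n3, ∑ j : Fin n3, ∑ b : Fin n2,
          zeta n3 ^ ((k:ℕ) * (j:ℕ)) * (X (j - l) a b * Y l b c) := Finset.sum_comm
    _ = ∑ l : Fin n3, ∑ m : Fin n3, ∑ b : Fin n2,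
          zeta n3 ^ ((k:ℕ) * (m:ℕ)) * zeta n3 ^ ((k:ℕ) * (l:ℕ)) * (X m a b * Y l b c) := by
        refine Finset.sum_congr rfl fun l _ => ?_
        refine Fintype.sum_equiv (Equiv.subRight l) _ _ fun x => ?_
        simp only [Equiv.subRight_apply]
        have hx : zeta n3 ^ ((k:ℕ) * (x:ℕ))
            = zeta n3 ^ ((k:ℕ) * ((x - l : Fin n3):ℕ)) * zeta n3 ^ ((k:ℕ) * (l:ℕ)) := by
          rw [← zeta_pow_fin_add h]
          norm_num
        refine Finset.sum_congr rfl fun b _ => ?_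
        rw [hx]
    _ = ∑ m : Fin n3, ∑ l : Fin n3, ∑ b : Fin n2,
          zeta n3 ^ ((k:ℕ) * (m:ℕ)) * zeta n3 ^ ((k:ℕ) * (l:ℕ)) * (X m a b * Y l b c) :=
        Finset.sum_comm
    _ = ∑ m : Fin n3, ∑ b : Fin n2, ∑ l : Fin n3,
          zeta n3 ^ ((k:ℕ) * (m:ℕ)) * zeta n3 ^ ((k:ℕ) * (l:ℕ)) * (X m a b * Y l b c) :=
        Finset.sum_congr rfl fun m _ => Finset.sum_comm
    _ = ∑ b : Fin n2, ∑ m : Fin n3, ∑ l : Fin n3,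
          zeta n3 ^ ((k:ℕ) * (m:ℕ)) * zeta n3 ^ ((k:ℕ) * (l:ℕ)) * (X m a b * Y l b c) :=
        Finset.sum_comm
    _ = ∑ b : Fin n2, (∑ m : Fin n3, zeta n3 ^ ((k:ℕ) * (m:ℕ)) * X m a b) *
          (∑ l : Fin n3, zeta n3 ^ ((k:ℕ) * (l:ℕ)) * Y l b c) := by
        refine Finset.sum_congr rfl fun b _ => ?_
        rw [Finset.sum_mul]
        refine Finset.sum_congr rfl fun m _ => ?_
        rw [Finset.mul_sum]
        refine Finset.sum_congr rfl fun l _ => ?_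
        ring

lemma neg_val_add_val {n3 : ℕ} [NeZero n3] (j : Fin n3) :
    (((-j : Fin n3) : ℕ) + (j : ℕ)) % n3 = 0 := by
  have h0 : ((-j) + j : Fin n3) = 0 := neg_add_cancel j
  have := congrArg Fin.val h0
  rw [Fin.val_add] at this
  simpa using this

lemma dft_tH {n1 n2 n3 : ℕ} (X : Fin n3 → Matrix (Fin n1) (Fin n2) ℂ) (k : Fin n3) :
    dft (tH X) k = (dft X k)ᴴ := by
  have h : n3 ≠ 0 := (Fin.pos_iff_nonempty.mpr ⟨k⟩).ne'
  haveI : NeZero n3 := ⟨h⟩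
  rw [dft_eq_zeta, dft_eq_zeta, Matrix.conjTranspose_sum]
  simp only [Matrix.conjTranspose_smul]
  refine Fintype.sum_equiv (Equiv.neg (Fin n3)) _ _ fun j => ?_
  simp only [Equiv.neg_apply]
  rw [tH]
  congr 1
  rw [RCLike.star_def]
  refine (conj_zeta_pow h _ _ ?_).symm
  rw [← Nat.mul_add]
  obtain ⟨c, hc⟩ := Nat.dvd_of_mod_eq_zero (neg_val_add_val j)
  rw [hc, Nat.mul_left_comm, Nat.mul_mod_right]

lemma dft_tId {n1 n3 : ℕ} (k : Fin n3) : dft (tId n1 n3) k = 1 := by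
  have h : n3 ≠ 0 := (Fin.pos_iff_nonempty.mpr ⟨k⟩).ne'
  haveI : NeZero n3 := ⟨h⟩
  rw [dft_eq_zeta]
  rw [Finset.sum_eq_single (0 : Fin n3)]
  · simp [tId]
  · intro j _ hj
    have : (j : ℕ) ≠ 0 := fun hv => hj (Fin.ext (by simpa using hv))
    simp [tId, this]
  · intro habs
    exact absurd (Finset.mem_univ _) habs

-- ### inverse dft
def idft {n1 n2 n3 : ℕ} (Z : Fin n3 → Matrix (Fin n1) (Fin n2) ℂ) :
    Fin n3 → Matrix (Fin n1) (Fin n2) ℂ :=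
  fun j => (n3 : ℂ)⁻¹ • ∑ l : Fin n3, (starRingEnd ℂ) (zeta n3 ^ ((j : ℕ) * (l : ℕ))) • Z l

lemma dft_idft {n1 n2 n3 : ℕ} (Z : Fin n3 → Matrix (Fin n1) (Fin n2) ℂ) :
    dft (idft Z) = Z := by
  funext k
  have h : n3 ≠ 0 := (Fin.pos_iff_nonempty.mpr ⟨k⟩).ne'
  have hn : (n3 : ℂ) ≠ 0 := Nat.cast_ne_zero.mpr h
  rw [dft_eq_zeta]
  calc
    ∑ j : Fin n3, zeta n3 ^ ((k:ℕ) * (j:ℕ)) • idft Z j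
      = ∑ j : Fin n3, ∑ l : Fin n3,
          ((n3:ℂ)⁻¹ * ((starRingEnd ℂ) (zeta n3 ^ ((j:ℕ) * (l:ℕ))) * zeta n3 ^ ((j:ℕ) * (k:ℕ)))) • Z l := by
        refine Finset.sum_congr rfl fun j _ => ?_
        rw [idft, smul_comm, Finset.smul_sum, Finset.smul_sum]
        refine Finset.sum_congr rfl fun l _ => ?_
        rw [smul_smul, smul_smul, Nat.mul_comm (k:ℕ) (j:ℕ)]
        ring_nf
    _ = ∑ l : Fin n3, ((n3:ℂ)⁻¹ * ∑ j : Fin n3,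
          (starRingEnd ℂ) (zeta n3 ^ ((j:ℕ) * (l:ℕ))) * zeta n3 ^ ((j:ℕ) * (k:ℕ))) • Z l := by
        rw [Finset.sum_comm]
        refine Finset.sum_congr rfl fun l _ => ?_
        rw [Finset.mul_sum, Finset.sum_smul]
    _ = ∑ l : Fin n3, ((n3:ℂ)⁻¹ * (if k = l then (n3:ℂ) else 0)) • Z l := by
        refine Finset.sum_congr rfl fun l _ => ?_
        rw [sum_zeta_orth h]
    _ = Z k := by
        simp only [mul_ite, mul_zero, inv_mul_cancel₀ hn, ite_smul, one_smul, zero_smul]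
        simp

-- ### extension of orthonormal columns
lemma exists_extend_orthonormal_cols {n r : ℕ} {T : Type} [Fintype T] [DecidableEq T]
    (f : T ↪ Fin r) (hrn : r ≤ n) (w : T → (Fin n → ℂ))
    (hw : ∀ t t', dotProduct (star (w t)) (w t') = if t = t' then 1 else 0) :
    ∃ W : Matrix (Fin n) (Fin r) ℂ, Wᴴ * W = 1 ∧ ∀ t, (fun i => W i (f t)) = w t := by
  classical
  set E := EuclideanSpace ℂ (Fin n)
  have hdim : Module.finrank ℂ E = Fintype.card (Fin n) := by
    simp [E]
  set g : Fin r ↪ Fin n := Fin.castLEEmb hrn with hg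
  set s : Set (Fin n) := Set.range (g ∘ f) with hs
  set v : Fin n → E := fun i =>
    if h : ∃ t, g (f t) = i then WithLp.toLp 2 (w h.choose) else 0 with hv
  have hinj : Function.Injective (g ∘ f) := g.injective.comp f.injective
  have hvt : ∀ t : T, v (g (f t)) = WithLp.toLp 2 (w t) := by
    intro t
    have hex : ∃ t', g (f t') = g (f t) := ⟨t, rfl⟩
    have hch : hex.choose = t := hinj hex.choose_spec
    simp only [hv, dif_pos hex]
    rw [hch]
  have hon : Orthonormal ℂ (s.restrict v) := by
    rw [orthonormal_iff_ite]
    rintro ⟨i, ti, hti⟩ ⟨i', ti', hti'⟩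
    subst hti hti'
    simp only [Set.restrict_apply, Function.comp_apply, hvt]
    rw [PiLp.inner_apply]
    simp only [RCLike.inner_apply, WithLp.ofLp_toLp]
    have := hw ti ti'
    simp only [dotProduct, Pi.star_apply, RCLike.star_def] at this
    change ∑ x, (v (g (f ti'))).ofLp x * (starRingEnd ℂ) ((v (g (f ti))).ofLp x) = _
    rw [hvt, hvt]
    simp only [WithLp.ofLp_toLp]
    rw [show (∑ i, w ti' i * (starRingEnd ℂ) (w ti i)) = (if ti = ti' then 1 else 0) by
      rw [← this]; exact Finset.sum_congr rfl fun i _ => mul_comm _ _]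
    by_cases hte : ti = ti'
    · subst hte; simp
    · rw [if_neg hte, if_neg (fun hc => hte (hinj (Subtype.ext_iff.mp hc)))]
  obtain ⟨b, hb⟩ := hon.exists_orthonormalBasis_extension_of_card_eq hdim
  refine ⟨Matrix.of fun i c => b (g c) i, ?_, ?_⟩
  · ext c c'
    rw [Matrix.mul_apply]
    have := orthonormal_iff_ite.mp b.orthonormal (g c) (g c')
    rw [PiLp.inner_apply] at this
    simp only [RCLike.inner_apply] at this
    simp only [Matrix.conjTranspose_apply, Matrix.of_apply, RCLike.star_def]
    rw [show (∑ i, (starRingEnd ℂ) (b (g c) i) * b (g c') i) = (if g c = g c' then 1 else 0) by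
      rw [← this]; exact Finset.sum_congr rfl fun i _ => mul_comm _ _]
    by_cases hcc : c = c'
    · subst hcc; simp [Matrix.one_apply]
    · rw [if_neg (fun hc => hcc (g.injective hc)), Matrix.one_apply_ne hcc]
  · intro t
    funext i
    have : b (g (f t)) = v (g (f t)) := hb _ ⟨t, rfl⟩
    simp only [Matrix.of_apply, this, hvt, WithLp.ofLp_toLp]

-- ### truncated SVD for complex matrices
open scoped ComplexOrder in
lemma exists_truncated_svd {m n r : ℕ} (A : Matrix (Fin m) (Fin n) ℂ)
    (hr : A.rank ≤ r) (hm : r ≤ m) (hn : r ≤ n) :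
    ∃ (U : Matrix (Fin m) (Fin r) ℂ) (S : Matrix (Fin r) (Fin r) ℂ)
      (V : Matrix (Fin n) (Fin r) ℂ),
      Uᴴ * U = 1 ∧ Vᴴ * V = 1 ∧ S.IsDiag ∧ A = U * S * Vᴴ := by
  classical
  set B := Aᴴ * A with hB
  have hBh : B.IsHermitian := Matrix.isHermitian_conjTranspose_mul_self A
  set μ : Fin n → ℝ := hBh.eigenvalues with hμ
  have hμ0 : ∀ i, 0 ≤ μ i := (Matrix.posSemidef_conjTranspose_mul_self A).eigenvalues_nonneg
  set vc : Fin n → (Fin n → ℂ) := fun i => ⇑(hBh.eigenvectorBasis i) with hvc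
  -- eigenvector equation
  have heig : ∀ i, B *ᵥ vc i = (μ i : ℂ) • vc i := by
    intro i
    rw [hvc]
    rw [hBh.mulVec_eigenvectorBasis i]
    funext p
    simp [Complex.real_smul, hμ]
  -- orthonormality of the eigenvector columns
  have hvon : ∀ i i', dotProduct (star (vc i)) (vc i') = if i = i' then 1 else 0 := by
    intro i i'
    have := orthonormal_iff_ite.mp hBh.eigenvectorBasis.orthonormal i i'
    rw [PiLp.inner_apply] at this
    simp only [RCLike.inner_apply] at this
    simpa [dotProduct, Pi.star_apply, RCLike.star_def, hvc, mul_comm] using this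
  -- key inner product computation
  have hkey : ∀ i i', dotProduct (star (A *ᵥ vc i)) (A *ᵥ vc i')
      = (μ i' : ℂ) * (if i = i' then 1 else 0) := by
    intro i i'
    rw [Matrix.star_mulVec, ← Matrix.dotProduct_mulVec, Matrix.mulVec_mulVec, ← hB, heig i']
    rw [dotProduct_smul, hvon, smul_eq_mul]
  -- the subtype of nonzero eigenvalues
  have hcard : Fintype.card {i // μ i ≠ 0} ≤ r := by
    have h1 : B.rank = Fintype.card {i // μ i ≠ 0} := hBh.rank_eq_card_non_zero_eigs
    have h2 : B.rank = A.rank := A.rank_conjTranspose_mul_self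
    omega
  obtain ⟨f⟩ : Nonempty ({i // μ i ≠ 0} ↪ Fin r) := by
    apply Function.Embedding.nonempty_of_card_le
    simpa using hcard
  set T := {i // μ i ≠ 0}
  set σv : T → ℝ := fun t => Real.sqrt (μ t) with hσv
  have hσpos : ∀ t : T, 0 < σv t := fun t => Real.sqrt_pos.mpr (lt_of_le_of_ne (hμ0 t) (Ne.symm t.2))
  have hσne : ∀ t : T, (σv t : ℂ) ≠ 0 := fun t => by
    exact_mod_cast Complex.ofReal_ne_zero.mpr (hσpos t).ne'
  have hσsq : ∀ t : T, (σv t : ℂ) * (σv t : ℂ) = (μ t : ℂ) := by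
    intro t
    rw [← Complex.ofReal_mul, Real.mul_self_sqrt (hμ0 t)]
  set u : T → (Fin m → ℂ) := fun t => ((σv t : ℂ))⁻¹ • (A *ᵥ vc t) with hu
  have huon : ∀ t t' : T, dotProduct (star (u t)) (u t') = if t = t' then 1 else 0 := by
    intro t t'
    rw [hu]
    simp only [star_smul, smul_dotProduct, dotProduct_smul, star_inv₀,
      RCLike.star_def, Complex.conj_ofReal]
    rw [hkey]
    by_cases htt : t = t'
    · subst htt
      rw [if_pos rfl, if_pos rfl, ← hσsq t]
      have hne := hσne t
      simp only [smul_eq_mul]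
      field_simp
    · have : (t : Fin n) ≠ (t' : Fin n) := fun hc => htt (Subtype.ext hc)
      rw [if_neg this, if_neg htt]
      simp
  obtain ⟨U, hUo, hUcol⟩ := exists_extend_orthonormal_cols f hm u huon
  obtain ⟨V, hVo, hVcol⟩ := exists_extend_orthonormal_cols f hn (fun t => vc t)
    (fun t t' => by
      rw [hvon]
      by_cases htt : t = t'
      · subst htt; simp
      · rw [if_neg (fun hc => htt (Subtype.ext hc)), if_neg htt])
  set d : Fin r → ℂ := fun c => if h : ∃ t, f t = c then ((σv h.choose : ℝ) : ℂ) else 0 with hd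
  refine ⟨U, Matrix.diagonal d, V, hUo, hVo, Matrix.isDiag_diagonal d, ?_⟩
  -- square orthonormal eigenvector matrix
  set V₀ : Matrix (Fin n) (Fin n) ℂ := Matrix.of fun p i => vc i p with hV₀def
  have hV₀ : V₀ᴴ * V₀ = 1 := by
    ext i i'
    rw [Matrix.mul_apply]
    simp only [Matrix.conjTranspose_apply, Matrix.of_apply, hV₀def]
    have := hvon i i'
    simp only [dotProduct, Pi.star_apply] at this
    rw [this, Matrix.one_apply]
  have hV₀' : V₀ * V₀ᴴ = 1 := mul_eq_one_comm.mp hV₀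
  have hAv0 : ∀ i : Fin n, μ i = 0 → A *ᵥ vc i = 0 := by
    intro i hi
    have := hkey i i
    rw [if_pos rfl, hi] at this
    simpa using dotProduct_star_self_eq_zero.mp (by simpa using this)
  ext a b
  have expand : A a b = ∑ i : Fin n, (A *ᵥ vc i) a * star (vc i b) := by
    conv_lhs => rw [show A = A * (V₀ * V₀ᴴ) by rw [hV₀', Matrix.mul_one]]
    rw [← Matrix.mul_assoc, Matrix.mul_apply]
    refine Finset.sum_congr rfl fun i _ => ?_
    have h1 : (A * V₀) a i = (A *ᵥ vc i) a := by
      rw [Matrix.mul_apply, Matrix.mulVec, dotProduct]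
      rfl
    rw [h1, Matrix.conjTranspose_apply]
    rfl
  rw [expand]
  -- RHS computation
  have colsum : (U * Matrix.diagonal d * Vᴴ) a b
      = ∑ c : Fin r, U a c * d c * star (V b c) := by
    rw [Matrix.mul_apply]
    refine Finset.sum_congr rfl fun c _ => ?_
    rw [Matrix.mul_diagonal, Matrix.conjTranspose_apply]
  rw [colsum]
  -- restrict both sums to the nonzero eigenvalue indices
  have lhs_eq : ∑ i : Fin n, (A *ᵥ vc i) a * star (vc i b)
      = ∑ t : T, (A *ᵥ vc t) a * star (vc t b) := by
    rw [← Finset.sum_subtype (Finset.univ.filter fun i => μ i ≠ 0)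
      (fun i => by simp) (fun i => (A *ᵥ vc i) a * star (vc i b))]
    symm
    apply Finset.sum_subset (Finset.filter_subset _ _)
    intro i _ hi
    simp only [Finset.mem_filter, Finset.mem_univ, true_and, not_not] at hi
    rw [hAv0 i hi]
    simp
  have rhs_eq : ∑ c : Fin r, U a c * d c * star (V b c)
      = ∑ t : T, U a (f t) * d (f t) * star (V b (f t)) := by
    have h1 : ∑ c : Fin r, U a c * d c * star (V b c)
        = ∑ c ∈ Finset.image f Finset.univ, U a c * d c * star (V b c) := by
      symm
      apply Finset.sum_subset (Finset.subset_univ _)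
      intro c _ hc
      have hne : ¬ ∃ t, f t = c := by
        intro ⟨t, ht⟩
        exact hc (Finset.mem_image.mpr ⟨t, Finset.mem_univ t, ht⟩)
      rw [hd]
      simp only [dif_neg hne]
      ring
    rw [h1, Finset.sum_image (fun t _ t' _ h => f.injective h)]
  rw [lhs_eq, rhs_eq]
  refine Finset.sum_congr rfl fun t _ => ?_
  have hdt : d (f t) = (σv t : ℂ) := by
    have hex : ∃ t', f t' = f t := ⟨t, rfl⟩
    have : hex.choose = t := f.injective hex.choose_spec
    rw [hd]
    simp only [dif_pos hex, this]
  have hUc : U a (f t) = ((σv t : ℂ))⁻¹ * (A *ᵥ vc t) a := by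
    have := congrFun (hUcol t) a
    rw [this, hu]
    simp
  have hVc : V b (f t) = vc t b := congrFun (hVcol t) b
  rw [hdt, hUc, hVc]
  field_simp
  rw [eq_div_iff (hσne t)]

theorem truncated_tSVD_exists {n1 n2 n3 : ℕ} (X : Fin n3 → Matrix (Fin n1) (Fin n2) ℂ) :
    ∃ (U : Fin n3 → Matrix (Fin n1) (Fin (tubalRank X)) ℂ)
      (S : Fin n3 → Matrix (Fin (tubalRank X)) (Fin (tubalRank X)) ℂ)
      (V : Fin n3 → Matrix (Fin n2) (Fin (tubalRank X)) ℂ),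
      tMul (tH U) U = tId (tubalRank X) n3 ∧
      tMul (tH V) V = tId (tubalRank X) n3 ∧
      (∀ k, (S k).IsDiag) ∧
      X = tMul U (tMul S (tH V)) := by
  classical
  have hrank : ∀ k, (dft X k).rank ≤ tubalRank X := fun k => by
    exact Finset.le_sup (f := fun k => (dft X k).rank) (Finset.mem_univ k)
  have hr1 : tubalRank X ≤ n1 := by
    exact Finset.sup_le fun k _ => le_trans (dft X k).rank_le_card_height (by simp)
  have hr2 : tubalRank X ≤ n2 := by
    exact Finset.sup_le fun k _ => le_trans (dft X k).rank_le_card_width (by simp)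
  have hsvd : ∀ k : Fin n3, ∃ (Uh : Matrix (Fin n1) (Fin (tubalRank X)) ℂ)
      (Sh : Matrix (Fin (tubalRank X)) (Fin (tubalRank X)) ℂ)
      (Vh : Matrix (Fin n2) (Fin (tubalRank X)) ℂ),
      Uhᴴ * Uh = 1 ∧ Vhᴴ * Vh = 1 ∧ Sh.IsDiag ∧ dft X k = Uh * Sh * Vhᴴ :=
    fun k => exists_truncated_svd _ (hrank k) hr1 hr2
  choose Uh Sh Vh hUo hVo hSd hXk using hsvd
  refine ⟨idft Uh, idft Sh, idft Vh, ?_, ?_, ?_, ?_⟩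
  · apply dft_injective
    funext k
    rw [dft_tMul, dft_tH, dft_idft, dft_tId]
    exact hUo k
  · apply dft_injective
    funext k
    rw [dft_tMul, dft_tH, dft_idft, dft_tId]
    exact hVo k
  · intro k i j hij
    show idft Sh k i j = 0
    rw [idft]
    simp only [Matrix.smul_apply, Matrix.sum_apply, smul_eq_mul]
    rw [Finset.sum_eq_zero fun l _ => by rw [hSd l hij, mul_zero]]
    simp
  · apply dft_injective
    funext k
    rw [dft_tMul, dft_tMul, dft_tH, dft_idft, dft_idft, dft_idft, hXk k, Matrix.mul_assoc]
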